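/- Let A = (Σ, Q, I, F, δ) be a complete NFA. The relation P(⊑^{bw}, ⊏^{di-sim}), which compares source states of transitions by backward finite trace inclusion and target states by strict direct forward simulation, is good for pruning: L(Prune(A, P(⊑^{bw}, ⊏^{di-sim}))) = L(A). -/

import Mathlib

/-- A nondeterministic automaton (used both as NBA and NFA):
initial states, accepting states, and a transition relation. -/
structure NA (A : Type*) (Q : Type*) where
  ini : Set Q
  acc : Set Q
  trans : Set (Q × A × Q)

namespace NA

variable {A Q Q₁ Q₂ : Type*}

/-- Forward and backward completeness. -/
def Complete (M : NA A Q) : Prop :=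
  ∀ (p : Q) (a : A), (∃ q, (q, a, p) ∈ M.trans) ∧ (∃ q, (p, a, q) ∈ M.trans)

/-- Infinite run on an infinite word. -/
def InfRun (M : NA A Q) (w : ℕ → A) (π : ℕ → Q) : Prop :=
  ∀ i, (π i, w i, π (i + 1)) ∈ M.trans

/-- Fairness: accepting states are visited infinitely often. -/
def Fair (M : NA A Q) (π : ℕ → Q) : Prop :=
  ∀ n, ∃ m, n ≤ m ∧ π m ∈ M.acc

/-- The ω-language of a Büchi automaton. -/
def BuchiLang (M : NA A Q) : Set (ℕ → A) :=
  {w | ∃ π, π 0 ∈ M.ini ∧ M.InfRun w π ∧ M.Fair π}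

/-- Finite run on a finite word (only the first `w.length + 1` values of `π` matter). -/
def FinRun (M : NA A Q) (w : List A) (π : ℕ → Q) : Prop :=
  ∀ (i : ℕ) (h : i < w.length), (π i, w.get ⟨i, h⟩, π (i + 1)) ∈ M.trans

/-- The finite-word language of an NFA. -/
def FinLang (M : NA A Q) : Set (List A) :=
  {w | ∃ π, π 0 ∈ M.ini ∧ M.FinRun w π ∧ π w.length ∈ M.acc}

/-- Direct (forward) trace inclusion. -/
def DiTraceIncl (M : NA A Q₁) (N : NA A Q₂) (p : Q₁) (q : Q₂) : Prop :=
  ∀ (w : ℕ → A) (π : ℕ → Q₁), π 0 = p → M.InfRun w π →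
    ∃ ρ : ℕ → Q₂, ρ 0 = q ∧ N.InfRun w ρ ∧ ∀ i, π i ∈ M.acc → ρ i ∈ N.acc

/-- Fair trace inclusion. -/
def FairTraceIncl (M : NA A Q₁) (N : NA A Q₂) (p : Q₁) (q : Q₂) : Prop :=
  ∀ (w : ℕ → A) (π : ℕ → Q₁), π 0 = p → M.InfRun w π →
    ∃ ρ : ℕ → Q₂, ρ 0 = q ∧ N.InfRun w ρ ∧ (M.Fair π → N.Fair ρ)

/-- Backward direct trace inclusion. -/
def BwDiTraceIncl (M : NA A Q₁) (N : NA A Q₂) (p : Q₁) (q : Q₂) : Prop :=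
  ∀ (w : List A) (π : ℕ → Q₁), π 0 ∈ M.ini → M.FinRun w π → π w.length = p →
    ∃ ρ : ℕ → Q₂, ρ 0 ∈ N.ini ∧ N.FinRun w ρ ∧ ρ w.length = q ∧
      ∀ i, i ≤ w.length → π i ∈ M.acc → ρ i ∈ N.acc

/-- Forward finite trace inclusion. -/
def FwFinTraceIncl (M : NA A Q₁) (N : NA A Q₂) (p : Q₁) (q : Q₂) : Prop :=
  ∀ (w : List A) (π : ℕ → Q₁), π 0 = p → M.FinRun w π → π w.length ∈ M.acc →
    ∃ ρ : ℕ → Q₂, ρ 0 = q ∧ N.FinRun w ρ ∧ ρ w.length ∈ N.acc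

/-- Backward finite trace inclusion. -/
def BwFinTraceIncl (M : NA A Q₁) (N : NA A Q₂) (p : Q₁) (q : Q₂) : Prop :=
  ∀ (w : List A) (π : ℕ → Q₁), π 0 ∈ M.ini → M.FinRun w π → π w.length = p →
    ∃ ρ : ℕ → Q₂, ρ 0 ∈ N.ini ∧ N.FinRun w ρ ∧ ρ w.length = q

/-- Counting backward trace inclusion: the matching initial trace visits
accepting states at least as often. -/
def CountBwTraceIncl (M : NA A Q) (p q : Q) : Prop :=
  ∀ (w : List A) (π : ℕ → Q), π 0 ∈ M.ini → M.FinRun w π → π w.length = p →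
    ∃ ρ : ℕ → Q, ρ 0 ∈ M.ini ∧ M.FinRun w ρ ∧ ρ w.length = q ∧
      {i | i ≤ w.length ∧ π i ∈ M.acc}.ncard ≤ {i | i ≤ w.length ∧ ρ i ∈ M.acc}.ncard

/-- `R` is a direct forward simulation. -/
def IsDiSim (M : NA A Q₁) (N : NA A Q₂) (R : Q₁ → Q₂ → Prop) : Prop :=
  ∀ p q, R p q → (p ∈ M.acc → q ∈ N.acc) ∧
    ∀ a p', (p, a, p') ∈ M.trans → ∃ q', (q, a, q') ∈ N.trans ∧ R p' q'

/-- Direct forward simulation (the largest direct forward simulation). -/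
def DiSim (M : NA A Q₁) (N : NA A Q₂) (p : Q₁) (q : Q₂) : Prop :=
  ∃ R, IsDiSim M N R ∧ R p q

/-- `R` is a backward direct simulation (matching accepting and initial states). -/
def IsBwDiSim (M : NA A Q₁) (N : NA A Q₂) (R : Q₁ → Q₂ → Prop) : Prop :=
  ∀ p q, R p q → (p ∈ M.acc → q ∈ N.acc) ∧ (p ∈ M.ini → q ∈ N.ini) ∧
    ∀ a p', (p', a, p) ∈ M.trans → ∃ q', (q', a, q) ∈ N.trans ∧ R p' q'

/-- Backward direct simulation (the largest backward direct simulation). -/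
def BwDiSim (M : NA A Q₁) (N : NA A Q₂) (p : Q₁) (q : Q₂) : Prop :=
  ∃ R, IsBwDiSim M N R ∧ R p q

/-- `R` is a backward finite-word simulation (matching only initial states). -/
def IsBwSim (M : NA A Q₁) (N : NA A Q₂) (R : Q₁ → Q₂ → Prop) : Prop :=
  ∀ p q, R p q → (p ∈ M.ini → q ∈ N.ini) ∧
    ∀ a p', (p', a, p) ∈ M.trans → ∃ q', (q', a, q) ∈ N.trans ∧ R p' q'

/-- Backward finite-word simulation (the largest backward finite-word simulation). -/
def BwSim (M : NA A Q₁) (N : NA A Q₂) (p : Q₁) (q : Q₂) : Prop :=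
  ∃ R, IsBwSim M N R ∧ R p q

/-- Strict version of a relation: `x ⊏ y` iff `x ⊑ y` and not `y ⊑ x`. -/
def StrictRel (R : Q₁ → Q₁ → Prop) (x y : Q₁) : Prop := R x y ∧ ¬ R y x

/-- Comparing two transitions endpoint-wise; they must carry the same symbol. -/
def PairRel (Rb Rf : Q₁ → Q₂ → Prop) (t : Q₁ × A × Q₁) (t' : Q₂ × A × Q₂) : Prop :=
  t.2.1 = t'.2.1 ∧ Rb t.1 t'.1 ∧ Rf t.2.2 t'.2.2

/-- Pruned automaton: keep the transitions that are maximal w.r.t. `P`. -/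
def prune (M : NA A Q) (P : (Q × A × Q) → (Q × A × Q) → Prop) : NA A Q :=
  ⟨M.ini, M.acc, {t | t ∈ M.trans ∧ ¬ ∃ t' ∈ M.trans, P t t'}⟩

/-- Cross-pruned automaton: remove transitions of `M` subsumed by transitions of `N`. -/
def pruneAB (M : NA A Q₁) (N : NA A Q₂) (P : (Q₁ × A × Q₁) → (Q₂ × A × Q₂) → Prop) :
    NA A Q₁ :=
  ⟨M.ini, M.acc, {t | t ∈ M.trans ∧ ¬ ∃ t' ∈ N.trans, P t t'}⟩

/-- Saturated automaton: add every transition `S`-below an existing transition. -/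
def saturate (M : NA A Q) (S : (Q × A × Q) → (Q × A × Q) → Prop) : NA A Q :=
  ⟨M.ini, M.acc, {t | ∃ t' ∈ M.trans, S t t'}⟩

/-- A transition is transient if it occurs at most once in every trace. -/
def Transient (M : NA A Q) (t : Q × A × Q) : Prop :=
  ∀ (w : ℕ → A) (π : ℕ → Q), M.InfRun w π →
    ∀ i j, (π i, w i, π (i + 1)) = t → (π j, w j, π (j + 1)) = t → i = j

/-- Equivalence class of `q` w.r.t. the equivalence induced by the preorder `R`. -/
def cls (R : Q → Q → Prop) (q : Q) : Set Q := {x | R q x ∧ R x q}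

/-- Quotient automaton by the preorder `R`; equivalence classes are modeled as
the corresponding subsets of `Q`. -/
def quot (M : NA A Q) (R : Q → Q → Prop) : NA A (Set Q) :=
  ⟨{c | ∃ q ∈ M.ini, c = cls R q},
   {c | ∃ q ∈ M.acc, c = cls R q},
   {t | ∃ q₁ q₂, t.1 = cls R q₁ ∧ t.2.2 = cls R q₂ ∧ (q₁, t.2.1, q₂) ∈ M.trans}⟩

/-- `R`-jumping run: before each transition, jump to an `R`-larger state. -/
def JumpRun (M : NA A Q) (R : Q → Q → Prop) (w : ℕ → A) (π π' : ℕ → Q) : Prop :=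
  ∀ i, R (π i) (π' i) ∧ (π' i, w i, π (i + 1)) ∈ M.trans

/-- A jumping run is fair if it is accepting at infinitely many steps. -/
def JumpFair (M : NA A Q) (R : Q → Q → Prop) (π π' : ℕ → Q) : Prop :=
  ∀ n, ∃ m, n ≤ m ∧ ∃ q'' ∈ M.acc, R (π m) q'' ∧ R q'' (π' m)

end NA

section Aux

variable {A Q : Type*}

theorem disim_isSim (M : NA A Q) : M.IsDiSim M (M.DiSim M) := by
  rintro p q ⟨R, hR, hpq⟩
  refine ⟨(hR p q hpq).1, fun a p' ht => ?_⟩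
  obtain ⟨q', hq', hR'⟩ := (hR p q hpq).2 a p' ht
  exact ⟨q', hq', R, hR, hR'⟩

theorem disim_refl (M : NA A Q) (p : Q) : M.DiSim M p p := by
  refine ⟨Eq, ?_, rfl⟩
  rintro p q rfl
  exact ⟨id, fun a p' ht => ⟨p', ht, rfl⟩⟩

theorem disim_trans (M : NA A Q) {x y z : Q} (h1 : M.DiSim M x y) (h2 : M.DiSim M y z) :
    M.DiSim M x z := by
  refine ⟨fun a c => ∃ b, M.DiSim M a b ∧ M.DiSim M b c, ?_, y, h1, h2⟩
  rintro p q ⟨b, hpb, hbq⟩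
  constructor
  · intro hp; exact (disim_isSim M b q hbq).1 ((disim_isSim M p b hpb).1 hp)
  · intro a p' ht
    obtain ⟨b', hb', h1'⟩ := (disim_isSim M p b hpb).2 a p' ht
    obtain ⟨q', hq', h2'⟩ := (disim_isSim M b q hbq).2 a b' hb'
    exact ⟨q', hq', b', h1', h2'⟩

/-- Rank of a state: number of states below it in direct simulation. -/
noncomputable def simRank (M : NA A Q) (q : Q) : ℕ :=
  Set.ncard {x | M.DiSim M x q}

theorem simRank_le [Fintype Q] (M : NA A Q) (q : Q) : simRank M q ≤ Fintype.card Q := by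
  have := Set.ncard_le_ncard (Set.subset_univ {x | M.DiSim M x q}) Set.finite_univ
  simpa [simRank, Set.ncard_univ] using this

theorem simRank_mono [Fintype Q] (M : NA A Q) {p q : Q} (h : M.DiSim M p q) :
    simRank M p ≤ simRank M q :=
  Set.ncard_le_ncard (fun x hx => disim_trans M hx h) (Set.toFinite _)

theorem simRank_strict [Fintype Q] (M : NA A Q) {p q : Q} (h : M.DiSim M p q)
    (h' : ¬ M.DiSim M q p) : simRank M p < simRank M q := by
  refine Set.ncard_lt_ncard ?_ (Set.toFinite _)
  refine ⟨fun x hx => disim_trans M hx h, fun hsub => h' (hsub (disim_refl M q))⟩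

/-- Extend a simulation along the tail of a run. -/
theorem sim_extend (M : NA A Q) (w : ℕ → A) (π : ℕ → Q) :
    ∀ (k i : ℕ) (q : Q), M.DiSim M (π i) q →
      (∀ j, j < k → (π (i + j), w (i + j), π (i + j + 1)) ∈ M.trans) →
      ∃ ρ : ℕ → Q, ρ i = q ∧
        (∀ j, j < k → (ρ (i + j), w (i + j), ρ (i + j + 1)) ∈ M.trans) ∧
        (∀ j, j ≤ k → M.DiSim M (π (i + j)) (ρ (i + j))) := by
  intro k
  induction k with
  | zero =>
    intro i q hq _
    refine ⟨fun _ => q, rfl, fun j hj => by omega, fun j hj => ?_⟩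
    interval_cases j
    simpa using hq
  | succ k ih =>
    intro i q hq htr
    obtain ⟨q', hq', hsim'⟩ := (disim_isSim M (π i) q hq).2 (w i) (π (i + 1))
      (by simpa using htr 0 (by omega))
    obtain ⟨ρ, hρ0, hρtr, hρsim⟩ := ih (i + 1) q' hsim'
      (fun j hj => by
        have := htr (j + 1) (by omega)
        have e : i + (j + 1) = i + 1 + j := by omega
        rwa [e] at this)
    refine ⟨fun j => if j ≤ i then q else ρ j, by simp, ?_, ?_⟩
    · intro j hj
      rcases Nat.eq_zero_or_pos j with rfl | hjpos
      · simpa [hρ0] using hq'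
      · have h1 : ¬ (i + j ≤ i) := by omega
        have h2 : ¬ (i + j + 1 ≤ i) := by omega
        simp only [h1, h2, if_false]
        have := hρtr (j - 1) (by omega)
        have e : i + 1 + (j - 1) = i + j := by omega
        rwa [e] at this
    · intro j hj
      rcases Nat.eq_zero_or_pos j with rfl | hjpos
      · simpa using hq
      · have h2 : ¬ (i + j ≤ i) := by omega
        simp only [h2, if_false]
        have := hρsim (j - 1) (by omega)
        have e : i + 1 + (j - 1) = i + j := by omega
        rwa [e] at this

theorem geom_bound (B : ℕ) (hB : 1 ≤ B) :
    ∀ k, ∑ j ∈ Finset.range k, (B - 1) * B ^ j = B ^ k - 1 := by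
  intro k
  induction k with
  | zero => simp
  | succ k ih =>
    rw [Finset.sum_range_succ, ih]
    have h1 : 1 ≤ B ^ k := Nat.one_le_pow _ _ hB
    have h2 : B ^ (k + 1) = B * B ^ k := by ring
    have h3 : B ^ k ≤ B * B ^ k := Nat.le_mul_of_pos_left _ hB
    have h4 : (B - 1) * B ^ k = B * B ^ k - B ^ k := by
      rw [Nat.sub_mul, one_mul]
    omega

/-- Weighted measure of a run: ranks with positional weights. -/
noncomputable def runMeasure [Fintype Q] (M : NA A Q) (n : ℕ) (ρ : ℕ → Q) : ℕ :=
  ∑ j ∈ Finset.range (n + 1), simRank M (ρ j) * (Fintype.card Q + 1) ^ j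

theorem runMeasure_lt [Fintype Q] (M : NA A Q) (n i : ℕ) (hi : i < n) (ρ σ' : ℕ → Q)
    (h1 : ∀ j, i + 1 ≤ j → j ≤ n → simRank M (ρ j) ≤ simRank M (σ' j))
    (h2 : simRank M (ρ (i + 1)) < simRank M (σ' (i + 1))) :
    runMeasure M n ρ < runMeasure M n σ' := by
  set B := Fintype.card Q + 1 with hB
  have hB1 : 1 ≤ B := by omega
  have hsplit : ∀ τ : ℕ → Q, runMeasure M n τ =
      ∑ j ∈ Finset.Ico 0 (i + 1), simRank M (τ j) * B ^ j +
      ∑ j ∈ Finset.Ico (i + 1) (n + 1), simRank M (τ j) * B ^ j := by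
    intro τ
    rw [Finset.sum_Ico_consecutive _ (Nat.zero_le _) (by omega)]
    rw [runMeasure, Finset.range_eq_Ico]
  have hA1 : ∑ j ∈ Finset.Ico 0 (i + 1), simRank M (ρ j) * B ^ j ≤ B ^ (i + 1) - 1 := by
    calc ∑ j ∈ Finset.Ico 0 (i + 1), simRank M (ρ j) * B ^ j
        ≤ ∑ j ∈ Finset.Ico 0 (i + 1), (B - 1) * B ^ j := by
          refine Finset.sum_le_sum fun j _ => Nat.mul_le_mul ?_ (le_refl _)
          have := simRank_le M (ρ j); omega
      _ = B ^ (i + 1) - 1 := by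
          rw [← Finset.range_eq_Ico]; exact geom_bound B hB1 (i + 1)
  have hheadρ := Finset.sum_eq_sum_Ico_succ_bot (a := i + 1) (b := n + 1) (by omega)
    (fun j => simRank M (ρ j) * B ^ j)
  have hheadσ := Finset.sum_eq_sum_Ico_succ_bot (a := i + 1) (b := n + 1) (by omega)
    (fun j => simRank M (σ' j) * B ^ j)
  have htail : ∑ j ∈ Finset.Ico (i + 1 + 1) (n + 1), simRank M (ρ j) * B ^ j ≤
      ∑ j ∈ Finset.Ico (i + 1 + 1) (n + 1), simRank M (σ' j) * B ^ j := by
    refine Finset.sum_le_sum fun j hj => ?_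
    rw [Finset.mem_Ico] at hj
    exact Nat.mul_le_mul (h1 j (by omega) (by omega)) (le_refl _)
  have hhead : simRank M (ρ (i + 1)) * B ^ (i + 1) + B ^ (i + 1) ≤
      simRank M (σ' (i + 1)) * B ^ (i + 1) := by
    calc simRank M (ρ (i + 1)) * B ^ (i + 1) + B ^ (i + 1)
        = (simRank M (ρ (i + 1)) + 1) * B ^ (i + 1) := by ring
      _ ≤ simRank M (σ' (i + 1)) * B ^ (i + 1) := Nat.mul_le_mul h2 (le_refl _)
  have hpow : 1 ≤ B ^ (i + 1) := Nat.one_le_pow _ _ (by omega)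
  have e1 := hsplit ρ
  have e2 := hsplit σ'
  omega

end Aux

/-- `P(⊑ᵇʷ, ⊏ᵈⁱ⁻ˢⁱᵐ)` (backward finite trace inclusion on sources,
strict direct forward simulation on targets) is good for pruning on complete NFAs. -/
theorem prune_bwFinTraceIncl_strictDiSim_gfp
    {A Q : Type*} [Fintype A] [Fintype Q] (M : NA A Q) (hM : M.Complete) :
    (M.prune (NA.PairRel (M.BwFinTraceIncl M) (NA.StrictRel (M.DiSim M)))).FinLang
      = M.FinLang := by
  apply Set.eq_of_subset_of_subset
  · rintro w ⟨π, hini, hrun, hacc⟩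
    exact ⟨π, hini, fun i h => (hrun i h).1, hacc⟩
  · rintro w ⟨π, hini, hrun, hacc⟩
    set n := w.length with hn
    set S : Set ℕ := {v | ∃ ρ : ℕ → Q, ρ 0 ∈ M.ini ∧ M.FinRun w ρ ∧ ρ n ∈ M.acc ∧
      runMeasure M n ρ = v} with hS
    have hSne : S.Nonempty := ⟨runMeasure M n π, π, hini, hrun, hacc, rfl⟩
    have hSbdd : BddAbove S := by
      refine ⟨∑ j ∈ Finset.range (n + 1), Fintype.card Q * (Fintype.card Q + 1) ^ j, ?_⟩
      rintro v ⟨ρ, -, -, -, rfl⟩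
      exact Finset.sum_le_sum fun j _ => Nat.mul_le_mul (simRank_le M _) (le_refl _)
    obtain ⟨ρ, hρini, hρrun, hρacc, hρm⟩ := Nat.sSup_mem hSne hSbdd
    refine ⟨ρ, hρini, ?_, hρacc⟩
    intro i hi
    refine ⟨hρrun i hi, ?_⟩
    rintro ⟨⟨p', a', r'⟩, htr', heq, hbw, hds, hnds⟩
    simp only at heq hbw hds hnds
    -- heq : w.get ⟨i, hi⟩ = a'
    -- A word-function extending w
    set wf : ℕ → A := fun j => w.getD j a' with hwf'
    have hwf : ∀ (j : ℕ) (h : j < n), wf j = w.get ⟨j, h⟩ := by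
      intro j h
      simp only [hwf', List.getD_eq_getElem?_getD, List.getElem?_eq_getElem h,
        Option.getD_some, List.get_eq_getElem]
    -- backward part: replace the prefix
    have htk : (w.take i).length = i := by
      rw [List.length_take]; omega
    have hrun_take : M.FinRun (w.take i) ρ := by
      intro j hj
      have hj' : j < n := by rw [List.length_take] at hj; omega
      have := hρrun j hj'
      simpa only [List.get_eq_getElem, List.getElem_take] using this
    obtain ⟨σ, hσini, hσrun, hσend⟩ := hbw (w.take i) ρ hρini hrun_take (by rw [htk])
    rw [htk] at hσend
    -- forward part: simulate the suffix
    have htrs : ∀ j, j < n - (i + 1) →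
        (ρ (i + 1 + j), wf (i + 1 + j), ρ (i + 1 + j + 1)) ∈ M.trans := by
      intro j hj
      have h2 : i + 1 + j < n := by omega
      rw [hwf _ h2]
      exact hρrun _ h2
    obtain ⟨τ, hτ0, hτtr, hτsim⟩ := sim_extend M wf ρ (n - (i + 1)) (i + 1) r' hds htrs
    have hτsim' : ∀ j, i + 1 ≤ j → j ≤ n → M.DiSim M (ρ j) (τ j) := by
      intro j hj1 hj2
      have := hτsim (j - (i + 1)) (by omega)
      have hidx : i + 1 + (j - (i + 1)) = j := by omega
      rwa [hidx] at this
    -- the combined run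
    set σ' : ℕ → Q := fun j => if j ≤ i then σ j else τ j with hσ'
    have hσ'ini : σ' 0 ∈ M.ini := by
      simp only [hσ', Nat.zero_le, if_pos]; exact hσini
    have hσ'run : M.FinRun w σ' := by
      intro j hj
      rcases lt_trichotomy j i with hji | rfl | hji
      · have h1 : j ≤ i := le_of_lt hji
        have h2 : j + 1 ≤ i := hji
        simp only [hσ', if_pos h1, if_pos h2]
        have := hσrun j (by rw [htk]; omega)
        simpa only [List.get_eq_getElem, List.getElem_take] using this
      · have h2 : ¬ (j + 1 ≤ j) := by omega
        simp only [hσ', le_refl, if_pos, if_neg h2, hσend, hτ0]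
        have hga : w.get ⟨j, hj⟩ = a' := heq
        rw [hga]
        exact htr'
      · have h1 : ¬ (j ≤ i) := by omega
        have h2 : ¬ (j + 1 ≤ i) := by omega
        simp only [hσ', if_neg h1, if_neg h2]
        have := hτtr (j - (i + 1)) (by omega)
        have hidx : i + 1 + (j - (i + 1)) = j := by omega
        rw [hidx] at this
        rwa [hwf j hj] at this
    have hσ'acc : σ' n ∈ M.acc := by
      have h1 : ¬ (n ≤ i) := by omega
      simp only [hσ', if_neg h1]
      exact (disim_isSim M _ _ (hτsim' n (by omega) (le_refl _))).1 hρacc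
    -- measure strictly increases: contradiction with maximality
    have hmem : runMeasure M n σ' ∈ S := ⟨σ', hσ'ini, hσ'run, hσ'acc, rfl⟩
    have hle : runMeasure M n σ' ≤ runMeasure M n ρ := hρm ▸ le_csSup hSbdd hmem
    have hlt : runMeasure M n ρ < runMeasure M n σ' := by
      refine runMeasure_lt M n i hi ρ σ' ?_ ?_
      · intro j hj1 hj2
        have h1 : ¬ (j ≤ i) := by omega
        simp only [hσ', if_neg h1]
        exact simRank_mono M (hτsim' j hj1 hj2)
      · have h1 : ¬ (i + 1 ≤ i) := by omega
        simp only [hσ', if_neg h1, hτ0]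
        exact simRank_strict M hds hnds
    omega
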